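/- For μ = 1 + 2√2, the logistic map ℓ_μ has a point p with ℓ_μ^3(p) = p, p not a fixed point, and (ℓ_μ^3)'(p) = 1; i.e., μ = 1 + 2√2 is a saddle-node (attractor-repellor) bifurcation value for a period-3 orbit. -/

import Mathlib

/-- The logistic map `ℓ_μ(x) = μ x (1 - x)`. -/
def logistic (μ x : ℝ) : ℝ := μ * x * (1 - x)

/-- The cubic whose roots are the newborn period-3 orbit at the saddle-node. -/
def cubic (s x : ℝ) : ℝ :=
  343 * x ^ 3 - (490 + 49 * s) * x ^ 2 + (91 + 112 * s) * x + (31 - 41 * s)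

lemma key_identity (s x : ℝ) (hs : s ^ 2 = 2) :
    (logistic (1 + 2 * s))^[3] x =
      x + (logistic (1 + 2 * s) x - x) * (cubic s x) ^ 2 * ((1593 + 1100 * s) / 117649) := by
  show logistic _ (logistic _ (logistic _ x)) = _
  simp only [logistic, cubic]
  linear_combination ((-588963/117649) * x^2 + (-692400/16807) * x^3 + (370026/2401) * x^4 +
    (155992/343) * x^5 + (-14309/7) * x^6 + (15916/7) * x^7 + (-796) * x^8 +
    (1177926/117649) * s * x + (30218/343) * s * x^2 + (-20996/49) * s * x^3 +
    (-293092/343) * s * x^4 + (2148290/343) * s * x^5 + (-531810/49) * s * x^6 +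
    (55408/7) * s * x^7 + (-2136) * s * x^8 + (-3698200/117649) * s^2 * x +
    (12608696/117649) * s^2 * x^2 + (7505296/16807) * s^2 * x^3 + (-7791360/2401) * s^2 * x^4 +
    (2669176/343) * s^2 * x^5 + (-461928/49) * s^2 * x^6 + (5824) * s^2 * x^7 +
    (-1456) * s^2 * x^8 + (-32) * s^3 * x^2 + (448) * s^3 * x^3 + (-2112) * s^3 * x^4 +
    (4864) * s^3 * x^5 + (-5952) * s^3 * x^6 + (3712) * s^3 * x^7 + (-928) * s^3 * x^8 +
    (128) * s^4 * x^3 + (-832) * s^4 * x^4 + (2176) * s^4 * x^5 + (-2816) * s^4 * x^6 +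
    (1792) * s^4 * x^7 + (-448) * s^4 * x^8 + (-128) * s^5 * x^4 + (512) * s^5 * x^5 +
    (-768) * s^5 * x^6 + (512) * s^5 * x^7 + (-128) * s^5 * x^8) * hs

lemma cubic_continuous (s : ℝ) : Continuous (cubic s) := by
  unfold cubic; continuity

lemma cubic_hasDerivAt (s p : ℝ) :
    HasDerivAt (cubic s) (343 * (3 * p ^ 2) - (490 + 49 * s) * (2 * p) + (91 + 112 * s)) p := by
  have h3 : HasDerivAt (fun x : ℝ => x ^ 3) (3 * p ^ 2) p := by
    simpa using hasDerivAt_pow 3 p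
  have h2 : HasDerivAt (fun x : ℝ => x ^ 2) (2 * p) p := by
    simpa using hasDerivAt_pow 2 p
  have h1 : HasDerivAt (fun x : ℝ => x) 1 p := hasDerivAt_id p
  have := (((h3.const_mul 343).sub (h2.const_mul (490 + 49 * s))).add
      (h1.const_mul (91 + 112 * s))).add_const (31 - 41 * s)
  exact this.congr_deriv (by ring)

/-- At `μ = 1 + 2√2` the logistic map has a period-3 point `p` (not a fixed
point) whose multiplier `(ℓ_μ³)'(p)` equals `1`: this is the saddle-node
(attractor-repellor) bifurcation creating the period-3 window. -/
theorem period3_saddle_node :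
    ∃ p ∈ Set.Icc (0 : ℝ) 1,
      (logistic (1 + 2 * Real.sqrt 2))^[3] p = p ∧
      logistic (1 + 2 * Real.sqrt 2) p ≠ p ∧
      deriv ((logistic (1 + 2 * Real.sqrt 2))^[3]) p = 1 := by
  set s := Real.sqrt 2 with hsdef
  have hs : s ^ 2 = 2 := Real.sq_sqrt (by norm_num)
  have hslb : (1.414 : ℝ) < s := by
    rw [hsdef, show (1.414 : ℝ) = Real.sqrt (1.414 ^ 2) from
      (Real.sqrt_sq (by norm_num)).symm]
    exact Real.sqrt_lt_sqrt (by positivity) (by norm_num)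
  have hsub : s < (1.415 : ℝ) := by
    rw [hsdef, show (1.415 : ℝ) = Real.sqrt (1.415 ^ 2) from
      (Real.sqrt_sq (by norm_num)).symm]
    exact Real.sqrt_lt_sqrt (by norm_num) (by norm_num)
  -- Find a root of the cubic in [0.5, 0.52]
  have hva : 0 < cubic s 0.5 := by unfold cubic; nlinarith
  have hvb : cubic s 0.52 < 0 := by unfold cubic; nlinarith
  have hsub' : Set.Icc (cubic s 0.52) (cubic s 0.5) ⊆ cubic s '' Set.Icc 0.5 0.52 :=
    intermediate_value_Icc' (by norm_num) (cubic_continuous s).continuousOn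
  obtain ⟨p, hpmem, hp0⟩ := hsub' ⟨hvb.le, hva.le⟩
  obtain ⟨hp1, hp2⟩ := hpmem
  refine ⟨p, ⟨by linarith, by linarith⟩, ?_, ?_, ?_⟩
  · rw [key_identity s p hs, hp0]; ring
  · -- logistic μ p - p = p * (2s - (1+2s) p) > 0
    intro h
    have hz : p * (2 * s - (1 + 2 * s) * p) = 0 := by
      have : logistic (1 + 2 * s) p - p = p * (2 * s - (1 + 2 * s) * p) := by
        unfold logistic; ring
      rw [h, sub_self] at this; linarith
    have hfac : 0 < 2 * s - (1 + 2 * s) * p := by nlinarith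
    nlinarith [mul_pos (show (0:ℝ) < p by linarith) hfac]
  · -- derivative computation
    have hF : (logistic (1 + 2 * s))^[3] = fun x =>
        x + (logistic (1 + 2 * s) x - x) * (cubic s x) ^ 2 * ((1593 + 1100 * s) / 117649) := by
      funext x; exact key_identity s x hs
    rw [hF]
    have h1 : HasDerivAt (fun x : ℝ => x) 1 p := hasDerivAt_id p
    have hlog : HasDerivAt (fun x => logistic (1 + 2 * s) x)
        ((1 + 2 * s) * p * (-1) + (1 + 2 * s) * 1 * (1 - p)) p := by
      have hm : HasDerivAt (fun x : ℝ => (1 + 2 * s) * x) ((1 + 2 * s) * 1) p :=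
        h1.const_mul _
      have hn : HasDerivAt (fun x : ℝ => 1 - x) (-1) p := h1.const_sub 1
      have := hm.mul hn
      exact this.congr_deriv (by ring)
    have hg := cubic_hasDerivAt s p
    have hg2 : HasDerivAt (fun x => (cubic s x) ^ 2)
        (2 * (cubic s p) ^ 1 * (343 * (3 * p ^ 2) - (490 + 49 * s) * (2 * p) + (91 + 112 * s)))
        p := by
      simpa using (show HasDerivAt (fun x => cubic s x ^ 2) _ p from hg.pow 2)
    have hprod := ((hlog.sub h1).mul hg2).mul_const ((1593 + 1100 * s) / 117649)
    have htot := h1.add hprod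
    rw [(show HasDerivAt (fun x => x + (logistic (1 + 2 * s) x - x) * cubic s x ^ 2 * ((1593 + 1100 * s) / 117649)) _ p from htot).deriv, hp0]
    ring
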